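/- arXiv:0808.2762 — 3 statements merged into one kernel-verified Lean document; each statement's English description precedes it below -/
import Mathlib

section
/- For every positive integer n, the sum over all positive integers j with j ≠ n of n/(j(n−j)) equals H_n − 2/n, where H_n is the n-th harmonic number. -/
open Filter

/-- The n-th harmonic number `H n = ∑_{j=1}^n 1/j`. -/
noncomputable def H (n : ℕ) : ℝ := ∑ j ∈ Finset.range n, 1 / (j + 1 : ℝ)

lemma H_succ (N : ℕ) : H (N + 1) = H N + 1 / (N + 1 : ℝ) := by
  simp [H, Finset.sum_range_succ]

lemma erase_Icc (n : ℕ) (hn : 0 < n) : (Finset.Icc 1 n).erase n = Finset.Icc 1 (n - 1) := by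
  ext j; simp only [Finset.mem_erase, Finset.mem_Icc]; omega

lemma base_case (n : ℕ) (hn : 0 < n) :
    ∑ j ∈ (Finset.Icc 1 n).erase n, (n : ℝ) / (j * ((n : ℝ) - j)) = 2 * H n - 2 / n := by
  rw [erase_Icc n hn, show Finset.Icc 1 (n-1) = Finset.Ico 1 n by ext j; simp only [Finset.mem_Icc, Finset.mem_Ico]; omega,
    Finset.sum_Ico_eq_sum_range]
  have key : ∀ i ∈ Finset.range (n - 1),
      (n : ℝ) / ((1 + i : ℕ) * ((n : ℝ) - (1 + i : ℕ))) =
        1 / ((i : ℝ) + 1) + 1 / (((n - 1 - 1 - i : ℕ) : ℝ) + 1) := by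
    intro i hi
    have hi' : i < n - 1 := Finset.mem_range.mp hi
    have h1 : ((n - 1 - 1 - i : ℕ) : ℝ) = (n : ℝ) - 2 - i := by
      have : n - 1 - 1 - i = n - (2 + i) := by omega
      rw [this, Nat.cast_sub (by omega : 2 + i ≤ n)]; push_cast; ring
    have h2 : ((i : ℝ) + 1) ≠ 0 := by positivity
    have h3 : (n : ℝ) - (1 + ((i:ℕ) : ℝ)) ≠ 0 := by
      have : (i : ℕ) + 1 < n := by omega
      have : ((i:ℕ) : ℝ) + 1 < n := by exact_mod_cast this
      nlinarith
    rw [h1, show (n : ℝ) - 2 - i + 1 = (n : ℝ) - (1 + i) by ring]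
    push_cast
    push_cast at h3
    field_simp
    ring
  rw [Finset.sum_congr rfl key, Finset.sum_add_distrib]
  have hA : ∑ i ∈ Finset.range (n - 1), (1 : ℝ) / ((i : ℝ) + 1) = H (n - 1) := by
    simp [H]
  have hB : ∑ i ∈ Finset.range (n - 1), (1 : ℝ) / (((n - 1 - 1 - i : ℕ) : ℝ) + 1) = H (n - 1) := by
    have := Finset.sum_range_reflect (fun j => 1 / ((j : ℝ) + 1)) (n - 1)
    simpa [H] using this
  rw [hA, hB]
  have hn1 : H n = H (n - 1) + 1 / (n : ℝ) := by
    conv_lhs => rw [show n = (n - 1) + 1 by omega]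
    rw [H_succ]
    congr 1
    push_cast [Nat.cast_sub (by omega : 1 ≤ n)]
    ring_nf
  rw [hn1]; ring

lemma key_formula (n : ℕ) (hn : 0 < n) : ∀ N, n ≤ N →
    ∑ j ∈ (Finset.Icc 1 N).erase n, (n : ℝ) / (j * ((n : ℝ) - j)) =
      H n - 2 / n + (H N - H (N - n)) := by
  refine Nat.le_induction ?_ ?_
  · rw [base_case n hn]
    simp [Nat.sub_self, H]
    ring
  · intro N hN ih
    have hset : (Finset.Icc 1 (N + 1)).erase n =
        insert (N + 1) ((Finset.Icc 1 N).erase n) := by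
      ext j; simp only [Finset.mem_erase, Finset.mem_Icc, Finset.mem_insert]; omega
    rw [hset, Finset.sum_insert (by simp only [Finset.mem_erase, Finset.mem_Icc]; omega), ih]
    have hsub : N + 1 - n = (N - n) + 1 := by omega
    rw [hsub, H_succ, H_succ]
    have hc : ((N - n : ℕ) : ℝ) = (N : ℝ) - n := by
      push_cast [Nat.cast_sub hN]; ring
    rw [hc]
    have h1 : ((N : ℝ) + 1) ≠ 0 := by positivity
    have h2 : (n : ℝ) - ((N : ℕ) + 1 : ℕ) ≠ 0 := by
      have : (n : ℝ) ≤ N := by exact_mod_cast hN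
      push_cast; nlinarith
    have h3 : (N : ℝ) - n + 1 ≠ 0 := by
      have : (n : ℝ) ≤ N := by exact_mod_cast hN
      nlinarith
    have hn' : (0:ℝ) < n := by exact_mod_cast hn
    push_cast at h2 ⊢
    field_simp
    ring

lemma tail_bound (n : ℕ) (hn : 0 < n) : ∀ N, n ≤ N →
    H N - H (N - n) ≤ (n : ℝ) / (((N - n : ℕ) : ℝ) + 1) := by
  intro N hN
  have hsplit : H (N - n) + ∑ j ∈ Finset.Ico (N - n) N, 1 / ((j : ℝ) + 1) = H N := by
    rw [H, H, Finset.range_eq_Ico, Finset.range_eq_Ico]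
    exact Finset.sum_Ico_consecutive (fun j : ℕ => 1 / ((j : ℝ) + 1)) (Nat.zero_le (N - n)) (by omega : N - n ≤ N)
  have hb : ∑ j ∈ Finset.Ico (N - n) N, 1 / ((j : ℝ) + 1) ≤
      (Finset.Ico (N - n) N).card • (1 / (((N - n : ℕ) : ℝ) + 1)) := by
    apply Finset.sum_le_card_nsmul
    intro j hj
    have hj' : N - n ≤ j := (Finset.mem_Ico.mp hj).1
    apply one_div_le_one_div_of_le
    · positivity
    · have : ((N - n : ℕ) : ℝ) ≤ j := by exact_mod_cast hj'
      linarith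
  rw [Nat.card_Ico] at hb
  have hcard : N - (N - n) = n := by omega
  rw [hcard, nsmul_eq_mul] at hb
  have : H N - H (N - n) = ∑ j ∈ Finset.Ico (N - n) N, 1 / ((j : ℝ) + 1) := by linarith
  rw [this]
  calc ∑ j ∈ Finset.Ico (N - n) N, 1 / ((j : ℝ) + 1)
      ≤ (n : ℝ) * (1 / (((N - n : ℕ) : ℝ) + 1)) := hb
    _ = (n : ℝ) / (((N - n : ℕ) : ℝ) + 1) := by ring

lemma tail_nonneg (n N : ℕ) (hN : n ≤ N) : 0 ≤ H N - H (N - n) := by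
  have : H (N - n) ≤ H N := by
    apply Finset.sum_le_sum_of_subset_of_nonneg
    · exact Finset.range_subset_range.mpr (by omega)
    · intro i _ _; positivity
  linarith

lemma tail_tendsto (n : ℕ) (hn : 0 < n) :
    Tendsto (fun N : ℕ => H N - H (N - n)) atTop (nhds 0) := by
  apply squeeze_zero'
  · filter_upwards [eventually_ge_atTop n] with N hN using tail_nonneg n N hN
  · filter_upwards [eventually_ge_atTop n] with N hN using tail_bound n hn N hN
  · have hg : Tendsto (fun N : ℕ => (((N - n : ℕ) : ℝ) + 1)) atTop atTop := by
      apply tendsto_atTop_add_const_right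
      exact tendsto_natCast_atTop_atTop.comp (tendsto_sub_atTop_nat n)
    exact Tendsto.div_atTop tendsto_const_nhds hg

/-- For every positive integer `n`, the series `∑_{j ≥ 1, j ≠ n} n/(j(n−j))`,
interpreted as the limit of the partial sums `∑_{j=1, j≠n}^N`, equals `H n − 2/n`. -/
theorem stmt1 (n : ℕ) (hn : 0 < n) :
    Tendsto (fun N : ℕ => ∑ j ∈ (Finset.Icc 1 N).erase n,
      (n : ℝ) / (j * ((n : ℝ) - j))) atTop (nhds (H n - 2 / n)) := by
  have heq : (fun N : ℕ => ∑ j ∈ (Finset.Icc 1 N).erase n, (n : ℝ) / (j * ((n : ℝ) - j)))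
      =ᶠ[atTop] fun N => H n - 2 / n + (H N - H (N - n)) := by
    filter_upwards [eventually_ge_atTop n] with N hN using key_formula n hn N hN
  have := (tendsto_const_nhds (x := H n - 2 / n) (f := atTop (α := ℕ))).add (tail_tendsto n hn)
  rw [add_zero] at this
  exact Tendsto.congr' heq.symm this
end

section
/- The sum over n ≥ 1 of H_{n−1,4}/n^2 equals (22/3)ζ(6) − 3ζ(2)ζ(4) − ζ(3)^2, where H_{n−1,4} = ∑_{j=1}^{n−1} 1/j^4. -/
open Finset Function Real
set_option maxHeartbeats 1000000

/-- Generalized harmonic number `H_{n,4} = ∑_{j=1}^n 1/j^4`. -/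
noncomputable def H4 (n : ℕ) : ℝ := ∑ j ∈ Finset.range n, 1 / ((j + 1 : ℝ)) ^ 4

/-- `ζ(r) = ∑_{n ≥ 1} 1/n^r`. -/
noncomputable def zetaR (r : ℕ) : ℝ := ∑' n : ℕ, 1 / ((n + 1 : ℝ)) ^ r

lemma zsum (r : ℕ) (hr : 2 ≤ r) : Summable (fun n : ℕ => 1 / ((n : ℝ) + 1) ^ r) := by
  have h : Summable (fun n : ℕ => 1 / (n : ℝ) ^ r) := summable_one_div_nat_pow.2 hr
  have h2 := (summable_nat_add_iff (f := fun n : ℕ => 1 / (n : ℝ) ^ r) 1).2 h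
  exact h2.congr fun n => by push_cast; ring

/-- Double-zeta integrand: `1/((x)^a (x+y)^b)` with `x = p.1+1`, `y = p.2+1`. -/
noncomputable def dzf (a b : ℕ) (p : ℕ × ℕ) : ℝ :=
  1 / (((p.1 : ℝ) + 1) ^ a * ((p.1 : ℝ) + (p.2 : ℝ) + 2) ^ b)

noncomputable def Dz (a b : ℕ) : ℝ := ∑' p : ℕ × ℕ, dzf a b p

lemma dzf_nonneg (a b : ℕ) (p : ℕ × ℕ) : 0 ≤ dzf a b p := by
  unfold dzf; positivity

lemma hDsum (a b : ℕ) (ha : 1 ≤ a) (hb : 2 ≤ b) (hab : a + b = 6) :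
    Summable (dzf a b) := by
  have hnn4 : 0 ≤ (fun n : ℕ => 1 / ((n : ℝ) + 1) ^ 4) := fun n => by positivity
  have hnn2 : 0 ≤ (fun n : ℕ => 1 / ((n : ℝ) + 1) ^ 2) := fun n => by positivity
  have hprod : Summable (fun p : ℕ × ℕ =>
      (1 / ((p.1 : ℝ) + 1) ^ 4) * (1 / ((p.2 : ℝ) + 1) ^ 2)) :=
    (zsum 4 (by norm_num)).mul_of_nonneg (zsum 2 (by norm_num)) hnn4 hnn2
  refine Summable.of_nonneg_of_le (dzf_nonneg a b) (fun p => ?_) hprod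
  set x : ℝ := (p.1 : ℝ) + 1 with hxd
  set y : ℝ := (p.2 : ℝ) + 1 with hyd
  have hx : (1:ℝ) ≤ x := by simp [hxd]
  have hy : (1:ℝ) ≤ y := by simp [hyd]
  have hx0 : (0:ℝ) < x := by linarith
  have hy0 : (0:ℝ) < y := by linarith
  have hs : ((p.1 : ℝ) + (p.2 : ℝ) + 2) = x + y := by rw [hxd, hyd]; ring
  unfold dzf
  rw [hs, div_mul_div_comm, one_mul]
  rw [div_le_div_iff₀ (by positivity) (by positivity)]
  have key : x ^ 4 * y ^ 2 ≤ x ^ a * (x + y) ^ b := by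
    have h1 : x ^ 4 = x ^ a * x ^ (b - 2) := by
      rw [← pow_add]; congr 1; omega
    have h2 : x ^ (b - 2) * y ^ 2 ≤ (x + y) ^ (b - 2) * (x + y) ^ 2 := by
      apply mul_le_mul
      · exact pow_le_pow_left₀ (by linarith) (by linarith) _
      · exact pow_le_pow_left₀ (by linarith) (by linarith) _
      · positivity
      · positivity
    calc x ^ 4 * y ^ 2 = x ^ a * (x ^ (b - 2) * y ^ 2) := by rw [h1]; ring
      _ ≤ x ^ a * ((x + y) ^ (b - 2) * (x + y) ^ 2) := by
          apply mul_le_mul_of_nonneg_left h2 (by positivity)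
      _ = x ^ a * (x + y) ^ b := by rw [← pow_add]; congr 2; omega
  calc 1 * (x ^ 4 * y ^ 2) = x ^ 4 * y ^ 2 := by ring
    _ ≤ x ^ a * (x + y) ^ b := key
    _ = 1 * (x ^ a * (x + y) ^ b) := by ring
  -- orientation check below

lemma hx_hasSum (a b : ℕ) (ha : 1 ≤ a) (hb : 2 ≤ b) (hab : a + b = 6) :
    HasSum (dzf a b) (Dz a b) := (hDsum a b ha hb hab).hasSum

lemma sw_hasSum (a b : ℕ) (ha : 1 ≤ a) (hb : 2 ≤ b) (hab : a + b = 6) :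
    HasSum (fun p : ℕ × ℕ => 1 / (((p.2 : ℝ) + 1) ^ a * ((p.1 : ℝ) + (p.2 : ℝ) + 2) ^ b))
      (Dz a b) := by
  have h := hx_hasSum a b ha hb hab
  have h2 := (Equiv.prodComm ℕ ℕ).hasSum_iff.2 h
  have he : (fun p : ℕ × ℕ => 1 / (((p.2 : ℝ) + 1) ^ a * ((p.1 : ℝ) + (p.2 : ℝ) + 2) ^ b))
      = (dzf a b) ∘ (Equiv.prodComm ℕ ℕ) := by
    funext p
    simp only [comp_apply, Equiv.prodComm_apply, dzf, Prod.fst_swap, Prod.snd_swap]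
    ring_nf
  rw [he]
  exact h2

-- the product function for ζ(a)ζ(b)
lemma prod_summable (a b : ℕ) (ha : 2 ≤ a) (hb : 2 ≤ b) :
    Summable (fun p : ℕ × ℕ => (1 / ((p.1 : ℝ) + 1) ^ a) * (1 / ((p.2 : ℝ) + 1) ^ b)) := by
  have hnna : 0 ≤ (fun n : ℕ => 1 / ((n : ℝ) + 1) ^ a) := fun n => by positivity
  have hnnb : 0 ≤ (fun n : ℕ => 1 / ((n : ℝ) + 1) ^ b) := fun n => by positivity
  exact (zsum a ha).mul_of_nonneg (zsum b hb) hnna hnnb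

lemma prod_hasSum (a b : ℕ) (ha : 2 ≤ a) (hb : 2 ≤ b) :
    HasSum (fun p : ℕ × ℕ => (1 / ((p.1 : ℝ) + 1) ^ a) * (1 / ((p.2 : ℝ) + 1) ^ b))
      (zetaR a * zetaR b) :=
  HasSum.mul (zsum a ha).hasSum (zsum b hb).hasSum (prod_summable a b ha hb)

lemma pf33 (x y : ℝ) (hx : 0 < x) (hy : 0 < y) :
    1 / (x ^ 3 * y ^ 3) =
      6 * (1 / (x ^ 1 * (x + y) ^ 5)) + 3 * (1 / (x ^ 2 * (x + y) ^ 4)) +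
        1 * (1 / (x ^ 3 * (x + y) ^ 3)) +
      (6 * (1 / (y ^ 1 * (x + y) ^ 5)) + 3 * (1 / (y ^ 2 * (x + y) ^ 4)) +
        1 * (1 / (y ^ 3 * (x + y) ^ 3))) := by
  have hs : 0 < x + y := by linarith
  field_simp
  ring

lemma pf24 (x y : ℝ) (hx : 0 < x) (hy : 0 < y) :
    1 / (x ^ 2 * y ^ 4) =
      4 * (1 / (x ^ 1 * (x + y) ^ 5)) + 1 * (1 / (x ^ 2 * (x + y) ^ 4)) +
      (4 * (1 / (y ^ 1 * (x + y) ^ 5)) + 3 * (1 / (y ^ 2 * (x + y) ^ 4)) +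
        2 * (1 / (y ^ 3 * (x + y) ^ 3)) + 1 * (1 / (y ^ 4 * (x + y) ^ 2))) := by
  have hs : 0 < x + y := by linarith
  field_simp
  ring

lemma shuffle33 :
    zetaR 3 * zetaR 3 =
      6 * Dz 1 5 + 3 * Dz 2 4 + 1 * Dz 3 3 + (6 * Dz 1 5 + 3 * Dz 2 4 + 1 * Dz 3 3) := by
  have H1 :
      HasSum (fun p : ℕ × ℕ =>
          6 * dzf 1 5 p + 3 * dzf 2 4 p + 1 * dzf 3 3 p +
            (6 * (1 / (((p.2 : ℝ) + 1) ^ 1 * ((p.1 : ℝ) + (p.2 : ℝ) + 2) ^ 5)) +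
              3 * (1 / (((p.2 : ℝ) + 1) ^ 2 * ((p.1 : ℝ) + (p.2 : ℝ) + 2) ^ 4)) +
              1 * (1 / (((p.2 : ℝ) + 1) ^ 3 * ((p.1 : ℝ) + (p.2 : ℝ) + 2) ^ 3))))
        (6 * Dz 1 5 + 3 * Dz 2 4 + 1 * Dz 3 3 + (6 * Dz 1 5 + 3 * Dz 2 4 + 1 * Dz 3 3)) := by
    exact ((((hx_hasSum 1 5 (by norm_num) (by norm_num) rfl).mul_left 6).add
        ((hx_hasSum 2 4 (by norm_num) (by norm_num) rfl).mul_left 3)).add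
        ((hx_hasSum 3 3 (by norm_num) (by norm_num) rfl).mul_left 1)).add
      ((((sw_hasSum 1 5 (by norm_num) (by norm_num) rfl).mul_left 6).add
        ((sw_hasSum 2 4 (by norm_num) (by norm_num) rfl).mul_left 3)).add
        ((sw_hasSum 3 3 (by norm_num) (by norm_num) rfl).mul_left 1))
  have H2 := prod_hasSum 3 3 (by norm_num) (by norm_num)
  have he : (fun p : ℕ × ℕ => (1 / ((p.1 : ℝ) + 1) ^ 3) * (1 / ((p.2 : ℝ) + 1) ^ 3))
      = (fun p : ℕ × ℕ =>
          6 * dzf 1 5 p + 3 * dzf 2 4 p + 1 * dzf 3 3 p +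
            (6 * (1 / (((p.2 : ℝ) + 1) ^ 1 * ((p.1 : ℝ) + (p.2 : ℝ) + 2) ^ 5)) +
              3 * (1 / (((p.2 : ℝ) + 1) ^ 2 * ((p.1 : ℝ) + (p.2 : ℝ) + 2) ^ 4)) +
              1 * (1 / (((p.2 : ℝ) + 1) ^ 3 * ((p.1 : ℝ) + (p.2 : ℝ) + 2) ^ 3)))) := by
    funext p
    have hx0 : (0:ℝ) < (p.1 : ℝ) + 1 := by positivity
    have hy0 : (0:ℝ) < (p.2 : ℝ) + 1 := by positivity
    have h := pf33 ((p.1 : ℝ) + 1) ((p.2 : ℝ) + 1) hx0 hy0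
    rw [show ((p.1 : ℝ) + 1 + ((p.2 : ℝ) + 1)) = (p.1 : ℝ) + (p.2 : ℝ) + 2 by ring] at h
    simp only [dzf]
    rw [div_mul_div_comm, one_mul]
    exact h
  rw [he] at H2
  exact H2.unique H1

lemma shuffle24 :
    zetaR 2 * zetaR 4 =
      4 * Dz 1 5 + 1 * Dz 2 4 +
        (4 * Dz 1 5 + 3 * Dz 2 4 + 2 * Dz 3 3 + 1 * Dz 4 2) := by
  have H1 :
      HasSum (fun p : ℕ × ℕ =>
          4 * dzf 1 5 p + 1 * dzf 2 4 p +
            (4 * (1 / (((p.2 : ℝ) + 1) ^ 1 * ((p.1 : ℝ) + (p.2 : ℝ) + 2) ^ 5)) +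
              3 * (1 / (((p.2 : ℝ) + 1) ^ 2 * ((p.1 : ℝ) + (p.2 : ℝ) + 2) ^ 4)) +
              2 * (1 / (((p.2 : ℝ) + 1) ^ 3 * ((p.1 : ℝ) + (p.2 : ℝ) + 2) ^ 3)) +
              1 * (1 / (((p.2 : ℝ) + 1) ^ 4 * ((p.1 : ℝ) + (p.2 : ℝ) + 2) ^ 2))))
        (4 * Dz 1 5 + 1 * Dz 2 4 +
          (4 * Dz 1 5 + 3 * Dz 2 4 + 2 * Dz 3 3 + 1 * Dz 4 2)) := by
    exact (((hx_hasSum 1 5 (by norm_num) (by norm_num) rfl).mul_left 4).add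
        ((hx_hasSum 2 4 (by norm_num) (by norm_num) rfl).mul_left 1)).add
      (((((sw_hasSum 1 5 (by norm_num) (by norm_num) rfl).mul_left 4).add
        ((sw_hasSum 2 4 (by norm_num) (by norm_num) rfl).mul_left 3)).add
        ((sw_hasSum 3 3 (by norm_num) (by norm_num) rfl).mul_left 2)).add
        ((sw_hasSum 4 2 (by norm_num) (by norm_num) rfl).mul_left 1))
  have H2 := prod_hasSum 2 4 (by norm_num) (by norm_num)
  have he : (fun p : ℕ × ℕ => (1 / ((p.1 : ℝ) + 1) ^ 2) * (1 / ((p.2 : ℝ) + 1) ^ 4))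
      = (fun p : ℕ × ℕ =>
          4 * dzf 1 5 p + 1 * dzf 2 4 p +
            (4 * (1 / (((p.2 : ℝ) + 1) ^ 1 * ((p.1 : ℝ) + (p.2 : ℝ) + 2) ^ 5)) +
              3 * (1 / (((p.2 : ℝ) + 1) ^ 2 * ((p.1 : ℝ) + (p.2 : ℝ) + 2) ^ 4)) +
              2 * (1 / (((p.2 : ℝ) + 1) ^ 3 * ((p.1 : ℝ) + (p.2 : ℝ) + 2) ^ 3)) +
              1 * (1 / (((p.2 : ℝ) + 1) ^ 4 * ((p.1 : ℝ) + (p.2 : ℝ) + 2) ^ 2)))) := by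
    funext p
    have hx0 : (0:ℝ) < (p.1 : ℝ) + 1 := by positivity
    have hy0 : (0:ℝ) < (p.2 : ℝ) + 1 := by positivity
    have h := pf24 ((p.1 : ℝ) + 1) ((p.2 : ℝ) + 1) hx0 hy0
    rw [show ((p.1 : ℝ) + 1 + ((p.2 : ℝ) + 1)) = (p.1 : ℝ) + (p.2 : ℝ) + 2 by ring] at h
    simp only [dzf]
    rw [div_mul_div_comm, one_mul]
    exact h
  rw [he] at H2
  exact H2.unique H1

section Stuffle

noncomputable def u33 (p : ℕ × ℕ) : ℝ := (1 / ((p.1 : ℝ) + 1) ^ 3) * (1 / ((p.2 : ℝ) + 1) ^ 3)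

lemma u33_nonneg (p : ℕ × ℕ) : 0 ≤ u33 p := by unfold u33; positivity

noncomputable def uLT (p : ℕ × ℕ) : ℝ := if p.1 < p.2 then u33 p else 0
noncomputable def uEQ (p : ℕ × ℕ) : ℝ := if p.1 = p.2 then u33 p else 0
noncomputable def uGT (p : ℕ × ℕ) : ℝ := if p.2 < p.1 then u33 p else 0

lemma usplit (p : ℕ × ℕ) : u33 p = uLT p + uEQ p + uGT p := by
  unfold uLT uEQ uGT
  rcases lt_trichotomy p.1 p.2 with h | h | h
  · rw [if_pos h, if_neg (by omega), if_neg (by omega)]; ring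
  · rw [if_neg (by omega), if_pos h, if_neg (by omega)]; ring
  · rw [if_neg (by omega), if_neg (by omega), if_pos h]; ring

lemma sub_summable {v : ℕ × ℕ → ℝ} (hv : ∀ p, v p = u33 p ∨ v p = 0) : Summable v := by
  refine Summable.of_nonneg_of_le (fun p => ?_) (fun p => ?_)
    (prod_summable 3 3 (by norm_num) (by norm_num))
  · rcases hv p with h | h <;> simp [h, u33_nonneg p]
  · rcases hv p with h | h <;> rw [h]
    · unfold u33; exact le_rfl
    · positivity

lemma uLT_tsum : ∑' p, uLT p = Dz 3 3 := by
  have hi : Injective (fun q : ℕ × ℕ => (q.1, q.1 + q.2 + 1)) := by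
    intro a b h
    simp only [Prod.mk.injEq] at h
    obtain ⟨h1, h2⟩ := h
    ext <;> omega
  have hsupp : support uLT ⊆ Set.range (fun q : ℕ × ℕ => (q.1, q.1 + q.2 + 1)) := by
    intro p hp
    have h : p.1 < p.2 := by
      by_contra h
      exact hp (by unfold uLT; rw [if_neg h])
    exact ⟨(p.1, p.2 - p.1 - 1), by ext <;> simp <;> omega⟩
  have key := hi.tsum_eq hsupp
  rw [← key]
  unfold Dz
  apply tsum_congr
  intro q
  unfold uLT u33 dzf
  rw [if_pos (by simp)]
  push_cast
  rw [div_mul_div_comm, one_mul]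
  ring_nf

lemma uGT_tsum : ∑' p, uGT p = Dz 3 3 := by
  have hi : Injective (fun q : ℕ × ℕ => (q.1 + q.2 + 1, q.1)) := by
    intro a b h
    simp only [Prod.mk.injEq] at h
    obtain ⟨h1, h2⟩ := h
    ext <;> omega
  have hsupp : support uGT ⊆ Set.range (fun q : ℕ × ℕ => (q.1 + q.2 + 1, q.1)) := by
    intro p hp
    have h : p.2 < p.1 := by
      by_contra h
      exact hp (by unfold uGT; rw [if_neg h])
    exact ⟨(p.2, p.1 - p.2 - 1), by ext <;> simp <;> omega⟩
  have key := hi.tsum_eq hsupp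
  rw [← key]
  unfold Dz
  apply tsum_congr
  intro q
  unfold uGT u33 dzf
  rw [if_pos (by simp)]
  push_cast
  rw [div_mul_div_comm, one_mul]
  ring_nf

lemma uEQ_tsum : ∑' p, uEQ p = zetaR 6 := by
  have hi : Injective (fun n : ℕ => ((n, n) : ℕ × ℕ)) := by
    intro a b h
    simpa using congrArg Prod.fst h
  have hsupp : support uEQ ⊆ Set.range (fun n : ℕ => ((n, n) : ℕ × ℕ)) := by
    intro p hp
    have h : p.1 = p.2 := by
      by_contra h
      exact hp (by unfold uEQ; rw [if_neg h])
    exact ⟨p.1, by ext <;> simp [h]⟩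
  have key := hi.tsum_eq hsupp
  rw [← key]
  unfold zetaR
  apply tsum_congr
  intro n
  unfold uEQ u33
  rw [if_pos rfl, div_mul_div_comm, one_mul, ← pow_add]

lemma stuffle33 : zetaR 3 * zetaR 3 = Dz 3 3 + zetaR 6 + Dz 3 3 := by
  have hLT : Summable uLT := sub_summable (fun p => by
    unfold uLT; split <;> simp [u33])
  have hEQ : Summable uEQ := sub_summable (fun p => by
    unfold uEQ; split <;> simp [u33])
  have hGT : Summable uGT := sub_summable (fun p => by
    unfold uGT; split <;> simp [u33])
  have h1 : ∑' p, u33 p = ∑' p, (uLT p + uEQ p + uGT p) := tsum_congr usplit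
  have h2 : ∑' p, (uLT p + uEQ p + uGT p)
      = (∑' p, uLT p) + (∑' p, uEQ p) + (∑' p, uGT p) := by
    rw [Summable.tsum_add (hLT.add hEQ) hGT, Summable.tsum_add hLT hEQ]
  have h0 : zetaR 3 * zetaR 3 = ∑' p, u33 p :=
    ((prod_hasSum 3 3 (by norm_num) (by norm_num)).tsum_eq).symm
  rw [h0, h1, h2, uLT_tsum, uEQ_tsum, uGT_tsum]

end Stuffle

/-- the triangular function `(n, j) ↦ [j < n] / ((j+1)^4 (n+1)^2)`. -/
noncomputable def F42 (p : ℕ × ℕ) : ℝ :=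
  if p.2 < p.1 then 1 / (((p.2 : ℝ) + 1) ^ 4 * ((p.1 : ℝ) + 1) ^ 2) else 0

lemma F42_summable : Summable F42 := by
  refine Summable.of_nonneg_of_le (fun p => ?_) (fun p => ?_)
    (prod_summable 2 4 (by norm_num) (by norm_num))
  · unfold F42; split
    · positivity
    · exact le_rfl
  · unfold F42; split
    · rw [div_mul_div_comm, one_mul,
        mul_comm ((((p.1 : ℕ) : ℝ) + 1) ^ 2) ((((p.2 : ℕ) : ℝ) + 1) ^ 4)]
    · positivity

lemma lhs_eq_Dz42 : ∑' n : ℕ, H4 n / ((n + 1 : ℝ)) ^ 2 = Dz 4 2 := by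
  -- Step 1: row sums
  have row : ∀ n : ℕ, H4 n / ((n + 1 : ℝ)) ^ 2 = ∑' j : ℕ, F42 (n, j) := by
    intro n
    have h1 : ∑' j : ℕ, F42 (n, j) = ∑ j ∈ Finset.range n, F42 (n, j) := by
      apply tsum_eq_sum
      intro j hj
      unfold F42
      rw [if_neg (by simp at hj ⊢; omega)]
    rw [h1]
    unfold H4 F42
    rw [Finset.sum_div]
    apply Finset.sum_congr rfl
    intro j hj
    rw [if_pos (by simpa using hj)]
    rw [div_div]
  -- Step 2: Fubini
  have fub : ∑' p : ℕ × ℕ, F42 p = ∑' n : ℕ, ∑' j : ℕ, F42 (n, j) :=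
    Summable.tsum_prod' F42_summable (fun n => F42_summable.prod_factor n)
  -- Step 3: reindex
  have hi : Injective (fun q : ℕ × ℕ => (q.1 + q.2 + 1, q.1)) := by
    intro a b h
    simp only [Prod.mk.injEq] at h
    obtain ⟨h1, h2⟩ := h
    ext <;> omega
  have hsupp : support F42 ⊆ Set.range (fun q : ℕ × ℕ => (q.1 + q.2 + 1, q.1)) := by
    intro p hp
    have h : p.2 < p.1 := by
      by_contra h
      exact hp (by unfold F42; rw [if_neg h])
    exact ⟨(p.2, p.1 - p.2 - 1), by ext <;> simp <;> omega⟩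
  have key := hi.tsum_eq hsupp
  have step3 : ∑' q : ℕ × ℕ, F42 (q.1 + q.2 + 1, q.1) = Dz 4 2 := by
    unfold Dz
    apply tsum_congr
    intro q
    unfold F42 dzf
    rw [if_pos (by simp)]
    push_cast
    ring_nf
  calc ∑' n : ℕ, H4 n / ((n + 1 : ℝ)) ^ 2 = ∑' n : ℕ, ∑' j : ℕ, F42 (n, j) :=
        tsum_congr row
    _ = ∑' p : ℕ × ℕ, F42 p := fub.symm
    _ = ∑' q : ℕ × ℕ, F42 (q.1 + q.2 + 1, q.1) := key.symm
    _ = Dz 4 2 := step3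

-- zeta values
lemma zetaR_eq (r : ℕ) (hr : 2 ≤ r) (c : ℝ)
    (h : HasSum (fun n : ℕ => 1 / (n : ℝ) ^ r) c) : zetaR r = c := by
  have hsum : Summable (fun n : ℕ => 1 / (n : ℝ) ^ r) := h.summable
  have h0 := Summable.tsum_eq_zero_add hsum
  rw [h.tsum_eq] at h0
  have hz : (1 : ℝ) / ((0 : ℕ) : ℝ) ^ r = 0 := by
    rw [Nat.cast_zero, zero_pow (by omega), div_zero]
  rw [hz, zero_add] at h0
  unfold zetaR
  rw [h0]
  apply tsum_congr
  intro n
  push_cast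
  ring

lemma zetaR2 : zetaR 2 = π ^ 2 / 6 := zetaR_eq 2 (by norm_num) _ hasSum_zeta_two

lemma zetaR4 : zetaR 4 = π ^ 4 / 90 := zetaR_eq 4 (by norm_num) _ hasSum_zeta_four

lemma bernoulli'_five : bernoulli' 5 = 0 := by
  have h52 : Nat.choose 5 2 = 10 := by decide
  have h53 : Nat.choose 5 3 = 10 := by decide
  rw [bernoulli'_def]
  norm_num [Finset.sum_range_succ, h52, h53]

lemma bernoulli'_six : bernoulli' 6 = 1 / 42 := by
  have h62 : Nat.choose 6 2 = 15 := by decide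
  have h63 : Nat.choose 6 3 = 20 := by decide
  have h64 : Nat.choose 6 4 = 15 := by decide
  rw [bernoulli'_def]
  norm_num [Finset.sum_range_succ, bernoulli'_five, h62, h63, h64]

lemma zetaR6 : zetaR 6 = π ^ 6 / 945 := by
  refine zetaR_eq 6 (by norm_num) _ ?_
  have hb : (bernoulli 6 : ℚ) = 1 / 42 := by
    rw [bernoulli_eq_bernoulli'_of_ne_one (by norm_num)]; exact bernoulli'_six
  have h := hasSum_zeta_nat (k := 3) (by norm_num)
  norm_num [hb, Nat.factorial] at h
  have h2 : HasSum (fun n : ℕ => 1 / (n : ℝ) ^ 6) (32 * π ^ 6 * (1 / 42) / 720) := by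
    simpa [one_div] using h
  rw [show (π ^ 6 / 945 : ℝ) = 32 * π ^ 6 * (1 / 42) / 720 by ring]
  exact h2

/-- `∑_{n≥1} H_{n−1,4}/n^2 = (22/3)ζ(6) − 3ζ(2)ζ(4) − ζ(3)^2`. -/
theorem stmt5 :
    ∑' n : ℕ, H4 n / ((n + 1 : ℝ)) ^ 2 =
      22 / 3 * zetaR 6 - 3 * zetaR 2 * zetaR 4 - zetaR 3 ^ 2 := by
  rw [lhs_eq_Dz42]
  have s33 := shuffle33
  have s24 := shuffle24
  have st := stuffle33
  have hz : zetaR 2 * zetaR 4 = 7 / 4 * zetaR 6 := by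
    rw [zetaR2, zetaR4, zetaR6]; ring
  have hsq : zetaR 3 ^ 2 = zetaR 3 * zetaR 3 := sq (zetaR 3)
  rw [hsq]
  linarith [s33, s24, st, hz]
end

section
/- The double sum 2·∑_{j,k≥1} 1/(j^3 (j+k)^3) equals ζ(3)^2 − 3ζ(4)ζ(2) + 6·∑_{k≥1} H_k/k^5 − 3·∑_{n≥1} H_{n−1,4}/n^2. -/
open Finset Filter Function

/-! ### Auxiliary machinery -/

/-- The basic term `1/(n+1)^r`. -/
noncomputable def pw (r n : ℕ) : ℝ := 1 / ((n : ℝ) + 1) ^ r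

/-- Partial sums of `pw`. -/
noncomputable def Hr (r n : ℕ) : ℝ := ∑ j ∈ Finset.range n, pw r j

/-- The double sum `T a b = ∑_{j,k ≥ 1} 1/(j^a (j+k)^b)` (0-indexed). -/
noncomputable def TT (a b : ℕ) : ℝ := ∑' p : ℕ × ℕ, pw a p.1 * pw b (p.1 + p.2 + 1)

lemma pw_pos (r n : ℕ) : 0 < pw r n := by unfold pw; positivity

lemma pw_nonneg (r n : ℕ) : 0 ≤ pw r n := (pw_pos r n).le

lemma pw_le {r m n : ℕ} (h : m ≤ n) : pw r n ≤ pw r m := by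
  unfold pw
  apply one_div_le_one_div_of_le (by positivity)
  gcongr

lemma pw_mul (a b n : ℕ) : pw a n * pw b n = pw (a + b) n := by
  unfold pw; rw [pow_add, div_mul_div_comm, one_mul]

lemma pw_pow (r n : ℕ) : (pw 1 n) ^ r = pw r n := by
  unfold pw; rw [div_pow, one_pow, pow_one]

lemma summable_pw {r : ℕ} (hr : 2 ≤ r) : Summable (pw r) := by
  have h : Summable (fun n : ℕ => 1 / (n : ℝ) ^ r) :=
    Real.summable_one_div_nat_pow.mpr (by omega)
  have h2 := (summable_nat_add_iff (f := fun n : ℕ => 1 / (n : ℝ) ^ r) 1).mpr h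
  refine h2.congr fun n => ?_
  simp [pw, Nat.cast_add]

lemma zetaR_eq_s7 (r : ℕ) : zetaR r = ∑' n, pw r n := rfl

lemma hasSum_pw {r : ℕ} (hr : 2 ≤ r) : HasSum (pw r) (zetaR r) := (summable_pw hr).hasSum

lemma zetaR_nonneg (r : ℕ) : 0 ≤ zetaR r := by
  rw [zetaR_eq_s7]; exact tsum_nonneg fun n => pw_nonneg r n

lemma Hr_nonneg (r n : ℕ) : 0 ≤ Hr r n := Finset.sum_nonneg fun i _ => pw_nonneg r i

lemma Hr_le {r : ℕ} (hr : 2 ≤ r) (n : ℕ) : Hr r n ≤ zetaR r := by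
  rw [zetaR_eq_s7]
  exact Summable.sum_le_tsum _ (fun i _ => pw_nonneg r i) (summable_pw hr)

lemma norm_summable_pw {r : ℕ} (hr : 2 ≤ r) : Summable (fun n => ‖pw r n‖) :=
  (summable_pw hr).congr fun n => by
    rw [Real.norm_eq_abs, abs_of_nonneg (pw_nonneg r n)]

lemma summable_pw_shift {r : ℕ} (hr : 2 ≤ r) (k : ℕ) : Summable (fun j => pw r (j + k)) :=
  (summable_nat_add_iff k).mpr (summable_pw hr)

lemma hasSum_pw_shift {r : ℕ} (hr : 2 ≤ r) (k : ℕ) :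
    HasSum (fun j => pw r (j + k)) (zetaR r - Hr r k) := by
  have h := Summable.sum_add_tsum_nat_add (f := pw r) k (summable_pw hr)
  have h2 : ∑' j, pw r (j + k) = zetaR r - Hr r k := by
    rw [zetaR_eq_s7]; unfold Hr; linarith
  exact h2 ▸ (summable_pw_shift hr k).hasSum

/-- H in terms of Hr. -/
lemma H_eq (n : ℕ) : H n = Hr 1 n := by
  unfold H Hr pw; exact Finset.sum_congr rfl fun j _ => by rw [pow_one]

lemma H_le (n : ℕ) : H n ≤ n := by
  unfold H
  calc ∑ j ∈ Finset.range n, 1 / ((j : ℝ) + 1) ≤ ∑ j ∈ Finset.range n, 1 := by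
        apply Finset.sum_le_sum
        intro j _
        rw [div_le_one (by positivity)]
        linarith [Nat.cast_nonneg (α := ℝ) j]
    _ = n := by simp

lemma H_nonneg (n : ℕ) : 0 ≤ H n := by
  rw [H_eq]; exact Hr_nonneg 1 n

/-- Telescoping: `∑_{j≥1} (1/j - 1/(j+k+1)) = H (k+1)`. -/
lemma hasSum_tel (k : ℕ) :
    HasSum (fun j : ℕ => pw 1 j - pw 1 (j + (k + 1))) (H (k + 1)) := by
  have hbound : ∀ j : ℕ, pw 1 j - pw 1 (j + (k + 1)) ≤ ((k : ℝ) + 1) * pw 2 j := by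
    intro j
    have hx : (0 : ℝ) < (j : ℝ) + 1 := by positivity
    have hy : (0 : ℝ) < (j : ℝ) + (k : ℝ) + 2 := by positivity
    have hcast : ((j + (k + 1) : ℕ) : ℝ) + 1 = (j : ℝ) + (k : ℝ) + 2 := by push_cast; ring
    simp only [pw, hcast, pow_one, pow_two]
    rw [div_sub_div _ _ hx.ne' hy.ne', one_mul, mul_one, mul_one_div]
    have hnum : ((j : ℝ) + (k : ℝ) + 2) - ((j : ℝ) + 1) = (k : ℝ) + 1 := by ring
    rw [hnum]
    apply div_le_div_of_nonneg_left (by positivity) (by positivity)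
    nlinarith [Nat.cast_nonneg (α := ℝ) j, Nat.cast_nonneg (α := ℝ) k]
  have hnn : ∀ j : ℕ, 0 ≤ pw 1 j - pw 1 (j + (k + 1)) := by
    intro j
    have := pw_le (r := 1) (Nat.le_add_right j (k + 1))
    linarith
  have hs : Summable (fun j : ℕ => pw 1 j - pw 1 (j + (k + 1))) :=
    Summable.of_nonneg_of_le hnn hbound ((summable_pw (le_refl 2)).mul_left _)
  -- partial sums
  have key : ∀ N : ℕ, ∑ j ∈ Finset.range N, (pw 1 j - pw 1 (j + (k + 1)))
      = Hr 1 (k + 1) - (Hr 1 (N + (k + 1)) - Hr 1 N) := by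
    intro N
    rw [Finset.sum_sub_distrib]
    have h1 : ∑ j ∈ Finset.range N, pw 1 (j + (k + 1))
        = Hr 1 ((k + 1) + N) - Hr 1 (k + 1) := by
      unfold Hr
      rw [Finset.sum_range_add (fun x => pw 1 x) (k + 1) N]
      have : ∀ j, pw 1 ((k + 1) + j) = pw 1 (j + (k + 1)) := fun j => by rw [Nat.add_comm]
      rw [Finset.sum_congr rfl fun j _ => this j]
      ring
    rw [h1]
    have : (k + 1) + N = N + (k + 1) := by omega
    rw [this]
    unfold Hr
    ring
  have hg0 : Tendsto (fun N => Hr 1 (N + (k + 1)) - Hr 1 N) atTop (nhds 0) := by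
    have hup : ∀ N : ℕ, Hr 1 (N + (k + 1)) - Hr 1 N ≤ ((k : ℝ) + 1) * pw 1 N := by
      intro N
      have : Hr 1 (N + (k + 1)) = Hr 1 N + ∑ x ∈ Finset.range (k + 1), pw 1 (N + x) := by
        unfold Hr; rw [Finset.sum_range_add]
      rw [this]
      have hsum : ∑ x ∈ Finset.range (k + 1), pw 1 (N + x)
          ≤ ∑ _x ∈ Finset.range (k + 1), pw 1 N :=
        Finset.sum_le_sum fun x _ => pw_le (Nat.le_add_right N x)
      have : ∑ _x ∈ Finset.range (k + 1), pw 1 N = ((k : ℝ) + 1) * pw 1 N := by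
        rw [Finset.sum_const, Finset.card_range]
        push_cast; ring
      linarith
    have hlow : ∀ N : ℕ, 0 ≤ Hr 1 (N + (k + 1)) - Hr 1 N := by
      intro N
      have : Hr 1 (N + (k + 1)) = Hr 1 N + ∑ x ∈ Finset.range (k + 1), pw 1 (N + x) := by
        unfold Hr; rw [Finset.sum_range_add]
      rw [this]
      have : 0 ≤ ∑ x ∈ Finset.range (k + 1), pw 1 (N + x) :=
        Finset.sum_nonneg fun x _ => pw_nonneg _ _
      linarith
    have htend : Tendsto (fun N : ℕ => ((k : ℝ) + 1) * pw 1 N) atTop (nhds 0) := by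
      have h1 : Tendsto (fun N : ℕ => pw 1 N) atTop (nhds 0) := by
        have := tendsto_one_div_add_atTop_nhds_zero_nat (𝕜 := ℝ)
        refine this.congr fun n => ?_
        simp [pw]
      have := h1.const_mul ((k : ℝ) + 1)
      simpa using this
    exact squeeze_zero hlow hup htend
  have hlim : Tendsto (fun N => ∑ j ∈ Finset.range N, (pw 1 j - pw 1 (j + (k + 1))))
      atTop (nhds (Hr 1 (k + 1))) := by
    simp only [key]
    have := tendsto_const_nhds (x := Hr 1 (k + 1)) (f := atTop (α := ℕ)) |>.sub hg0
    simpa using this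
  have := tendsto_nhds_unique hs.hasSum.tendsto_sum_nat hlim
  rw [H_eq]
  exact this ▸ hs.hasSum

/-- Summability of the double sums. -/
lemma summable_TT {a b : ℕ} (ha : 2 ≤ a) (hb : 2 ≤ b) :
    Summable (fun p : ℕ × ℕ => pw a p.1 * pw b (p.1 + p.2 + 1)) := by
  apply Summable.of_nonneg_of_le
    (fun p => mul_nonneg (pw_nonneg _ _) (pw_nonneg _ _)) (fun p => ?_)
    (summable_mul_of_summable_norm (norm_summable_pw ha) (norm_summable_pw hb))
  exact mul_le_mul_of_nonneg_left (pw_le (by omega)) (pw_nonneg _ _)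

/-- Fubini-type identity: `∑_n Hr a n * pw b n = TT a b`. -/
lemma tsum_Hr_mul (a b : ℕ) (ha : 2 ≤ a) (hb : 2 ≤ b) :
    ∑' n : ℕ, Hr a n * pw b n = TT a b := by
  classical
  set W : ℕ × ℕ → ℝ := fun q => if q.2 < q.1 then pw a q.2 * pw b q.1 else 0 with hW
  have hWnn : ∀ q, 0 ≤ W q := by
    intro q
    by_cases h : q.2 < q.1 <;>
      simp [hW, h, mul_nonneg (pw_nonneg _ _) (pw_nonneg _ _)]
  have hWsum : Summable W := by
    apply Summable.of_nonneg_of_le hWnn (fun q => ?_)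
      (summable_mul_of_summable_norm (norm_summable_pw hb) (norm_summable_pw ha))
    by_cases h : q.2 < q.1
    · simp only [hW, if_pos h]
      rw [mul_comm]
    · simp only [hW, if_neg h]
      exact mul_nonneg (pw_nonneg _ _) (pw_nonneg _ _)
  have hrowsum : ∀ n, Summable fun j => W (n, j) := by
    intro n
    apply summable_of_ne_finset_zero (s := Finset.range n)
    intro j hj
    rw [Finset.mem_range, not_lt] at hj
    simp only [hW, if_neg (by omega : ¬ j < n)]
  have hrow : ∀ n, ∑' j, W (n, j) = Hr a n * pw b n := by
    intro n
    rw [tsum_eq_sum (s := Finset.range n)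
      (fun j hj => by
        rw [Finset.mem_range, not_lt] at hj
        simp only [hW, if_neg (by omega : ¬ j < n)])]
    unfold Hr
    rw [Finset.sum_mul]
    apply Finset.sum_congr rfl
    intro j hj
    simp only [hW, if_pos (Finset.mem_range.mp hj)]
  have h1 : ∑' q : ℕ × ℕ, W q = ∑' n, ∑' j, W (n, j) := Summable.tsum_prod' hWsum hrowsum
  have h2 : ∑' q : ℕ × ℕ, W q = TT a b := by
    rw [TT]
    have hinj : Function.Injective (fun p : ℕ × ℕ => (p.1 + p.2 + 1, p.1)) := by
      rintro ⟨j, k⟩ ⟨j', k'⟩ h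
      simp only [Prod.mk.injEq] at h
      obtain ⟨h1, h2⟩ := h
      exact Prod.ext h2 (by omega)
    have hsupp : Function.support W ⊆ Set.range (fun p : ℕ × ℕ => (p.1 + p.2 + 1, p.1)) := by
      rintro ⟨n, j⟩ h
      simp only [Function.mem_support, hW] at h
      have hj : j < n := by by_contra hc; simp [hc] at h
      refine ⟨(j, n - j - 1), ?_⟩
      show (j + (n - j - 1) + 1, j) = (n, j)
      exact Prod.ext (by omega) rfl
    rw [← hinj.tsum_eq hsupp]
    apply tsum_congr
    rintro ⟨j, k⟩
    simp only [hW]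
    rw [if_pos (by omega)]
  calc ∑' n : ℕ, Hr a n * pw b n = ∑' n, ∑' j, W (n, j) :=
        tsum_congr fun n => (hrow n).symm
    _ = ∑' q : ℕ × ℕ, W q := h1.symm
    _ = TT a b := h2

set_option maxHeartbeats 800000 in
lemma stuffle (a b : ℕ) (ha : 2 ≤ a) (hb : 2 ≤ b) :
    zetaR a * zetaR b = TT a b + TT b a + zetaR (a + b) := by
  have hna := norm_summable_pw ha
  have hnb := norm_summable_pw hb
  have hsumz : Summable fun z : ℕ × ℕ => pw a z.1 * pw b z.2 :=
    summable_mul_of_summable_norm hna hnb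
  have h0 : zetaR a * zetaR b = ∑' z : ℕ × ℕ, pw a z.1 * pw b z.2 := by
    rw [zetaR_eq_s7, zetaR_eq_s7]
    exact tsum_mul_tsum_of_summable_norm hna hnb
  have h1 : (∑' z : ℕ × ℕ, pw a z.1 * pw b z.2) = ∑' m, ∑' n, pw a m * pw b n :=
    Summable.tsum_prod' hsumz (fun m => (summable_pw hb).mul_left (pw a m))
  rw [h0, h1]
  have hTsum := summable_TT ha hb
  have hrow : ∀ m, (∑' n, pw a m * pw b n)
      = pw a m * Hr b m + pw (a + b) m + ∑' k, pw a m * pw b (m + k + 1) := by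
    intro m
    rw [tsum_mul_left]
    have hsplit : (∑' n, pw b n) = Hr b (m + 1) + ∑' k, pw b (k + (m + 1)) :=
      (Summable.sum_add_tsum_nat_add (m + 1) (summable_pw hb)).symm
    rw [hsplit]
    have hHr : Hr b (m + 1) = Hr b m + pw b m := Finset.sum_range_succ _ _
    have hsh : (∑' k, pw b (k + (m + 1))) = ∑' k, pw b (m + k + 1) :=
      tsum_congr fun k => by rw [show k + (m + 1) = m + k + 1 by omega]
    have htm : (∑' k, pw a m * pw b (m + k + 1)) = pw a m * ∑' k, pw b (m + k + 1) :=
      tsum_mul_left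
    rw [hHr, hsh, htm, mul_add, mul_add, pw_mul]
  rw [tsum_congr hrow]
  have s1 : Summable (fun m => pw a m * Hr b m) := by
    apply Summable.of_nonneg_of_le
      (fun m => mul_nonneg (pw_nonneg _ _) (Hr_nonneg _ _)) (fun m => ?_)
      ((summable_pw ha).mul_right (zetaR b))
    exact mul_le_mul_of_nonneg_left (Hr_le hb m) (pw_nonneg _ _)
  have s2 : Summable (pw (a + b)) := summable_pw (by omega)
  have s3 : Summable (fun m => ∑' k, pw a m * pw b (m + k + 1)) := by
    have := ((summable_prod_of_nonneg
      (f := fun p : ℕ × ℕ => pw a p.1 * pw b (p.1 + p.2 + 1))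
      (fun p => mul_nonneg (pw_nonneg _ _) (pw_nonneg _ _))).mp hTsum).2
    exact this
  rw [Summable.tsum_add (s1.add s2) s3, Summable.tsum_add s1 s2]
  have e1 : ∑' m, pw a m * Hr b m = TT b a := by
    rw [← tsum_Hr_mul b a hb ha]
    exact tsum_congr fun m => mul_comm _ _
  have e2 : ∑' m, pw (a + b) m = zetaR (a + b) := (zetaR_eq_s7 _).symm
  have e3 : (∑' m, ∑' k, pw a m * pw b (m + k + 1)) = TT a b := by
    rw [TT]
    exact (Summable.tsum_prod' hTsum (fun m => ((summable_pw_shift hb (m + 1)).mul_left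
      (pw a m)).congr (fun k => by rw [show k + (m + 1) = m + k + 1 by omega]))).symm
  rw [e1, e2, e3]
  ring


lemma hasSum_row (k : ℕ) :
    HasSum (fun j : ℕ => pw 3 j * pw 3 (j + (k + 1)))
      (pw 3 k * Hr 3 (k + 1) + 3 * pw 4 k * Hr 2 (k + 1)
        - 6 * pw 4 k * zetaR 2 + 6 * pw 5 k * H (k + 1)) := by
  set c : ℝ := pw 1 k with hc
  have h2 : (2 : ℕ) ≤ 2 := le_refl 2
  have h3 : (2 : ℕ) ≤ 3 := by omega
  have hcomb := (((((hasSum_pw h3).mul_left (c ^ 3)).sub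
      ((hasSum_pw h2).mul_left (3 * c ^ 4))).add
      ((hasSum_tel k).mul_left (6 * c ^ 5))).sub
      ((hasSum_pw_shift h2 (k + 1)).mul_left (3 * c ^ 4))).sub
      ((hasSum_pw_shift h3 (k + 1)).mul_left (c ^ 3))
  have heq : (fun j : ℕ => c ^ 3 * pw 3 j - 3 * c ^ 4 * pw 2 j
        + 6 * c ^ 5 * (pw 1 j - pw 1 (j + (k + 1)))
        - 3 * c ^ 4 * pw 2 (j + (k + 1)) - c ^ 3 * pw 3 (j + (k + 1)))
      = fun j : ℕ => pw 3 j * pw 3 (j + (k + 1)) := by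
    funext j
    have hx : (0 : ℝ) < (j : ℝ) + 1 := by positivity
    have hK : (0 : ℝ) < (k : ℝ) + 1 := by positivity
    have hxK : ((j + (k + 1) : ℕ) : ℝ) + 1 = ((j : ℝ) + 1) + ((k : ℝ) + 1) := by
      push_cast; ring
    simp only [pw, hc, hxK, pow_one]
    rw [div_pow, div_pow, div_pow, one_pow]
    field_simp
    ring
  rw [heq] at hcomb
  have hval : c ^ 3 * zetaR 3 - 3 * c ^ 4 * zetaR 2 + 6 * c ^ 5 * H (k + 1)
      - 3 * c ^ 4 * (zetaR 2 - Hr 2 (k + 1)) - c ^ 3 * (zetaR 3 - Hr 3 (k + 1))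
      = pw 3 k * Hr 3 (k + 1) + 3 * pw 4 k * Hr 2 (k + 1)
        - 6 * pw 4 k * zetaR 2 + 6 * pw 5 k * H (k + 1) := by
    rw [← pw_pow 3 k, ← pw_pow 4 k, ← pw_pow 5 k, ← hc]
    ring
  rwa [hval] at hcomb


lemma pw_def (r n : ℕ) : pw r n = 1 / ((n : ℝ) + 1) ^ r := rfl

set_option maxHeartbeats 1000000 in
lemma R1 : 6 * (∑' k : ℕ, H (k + 1) / ((k + 1 : ℝ)) ^ 5)
    = 6 * (zetaR 4 * zetaR 2) - 4 * zetaR 6 - 3 * TT 2 4 := by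
  have h23 : (2 : ℕ) ≤ 3 := by omega
  have h24 : (2 : ℕ) ≤ 4 := by omega
  have hT33 := summable_TT h23 h23
  have hswapfun : Summable (fun q : ℕ × ℕ => pw 3 q.2 * pw 3 (q.2 + q.1 + 1)) := by
    have h := (Equiv.prodComm ℕ ℕ).summable_iff
      (f := fun p : ℕ × ℕ => pw 3 p.1 * pw 3 (p.1 + p.2 + 1))
    exact h.mpr hT33
  have hstep1 : TT 3 3 = ∑' k, ∑' j, pw 3 j * pw 3 (j + (k + 1)) := by
    rw [TT, ← (Equiv.prodComm ℕ ℕ).tsum_eq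
      (fun p : ℕ × ℕ => pw 3 p.1 * pw 3 (p.1 + p.2 + 1))]
    have h0 : (∑' q : ℕ × ℕ,
        (fun p : ℕ × ℕ => pw 3 p.1 * pw 3 (p.1 + p.2 + 1)) ((Equiv.prodComm ℕ ℕ) q))
        = ∑' q : ℕ × ℕ, pw 3 q.2 * pw 3 (q.2 + q.1 + 1) := tsum_congr fun q => rfl
    rw [h0]
    exact Summable.tsum_prod' hswapfun (fun k => (hasSum_row k).summable)
  have hrowval : ∀ k, (∑' j, pw 3 j * pw 3 (j + (k + 1)))
      = pw 3 k * Hr 3 (k + 1) + 3 * (pw 4 k * Hr 2 (k + 1))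
        - 6 * (pw 4 k * zetaR 2) + 6 * (pw 5 k * H (k + 1)) :=
    fun k => ((hasSum_row k).tsum_eq).trans (by ring)
  have sf1 : Summable (fun k => pw 3 k * Hr 3 (k + 1)) := by
    apply Summable.of_nonneg_of_le
      (fun k => mul_nonneg (pw_nonneg _ _) (Hr_nonneg _ _)) (fun k => ?_)
      ((summable_pw h23).mul_right (zetaR 3))
    exact mul_le_mul_of_nonneg_left (Hr_le h23 _) (pw_nonneg _ _)
  have sf2 : Summable (fun k => pw 4 k * Hr 2 (k + 1)) := by
    apply Summable.of_nonneg_of_le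
      (fun k => mul_nonneg (pw_nonneg _ _) (Hr_nonneg _ _)) (fun k => ?_)
      ((summable_pw h24).mul_right (zetaR 2))
    exact mul_le_mul_of_nonneg_left (Hr_le (le_refl 2) _) (pw_nonneg _ _)
  have sf3 : Summable (fun k => pw 4 k * zetaR 2) := (summable_pw h24).mul_right _
  have sf4 : Summable (fun k => pw 5 k * H (k + 1)) := by
    apply Summable.of_nonneg_of_le
      (fun k => mul_nonneg (pw_nonneg _ _) (H_nonneg _)) (fun k => ?_) (summable_pw h24)
    have h1 : H (k + 1) ≤ ((k : ℝ) + 1) := by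
      have := H_le (k + 1); push_cast at this; linarith
    have h2 : pw 5 k * H (k + 1) ≤ pw 5 k * ((k : ℝ) + 1) :=
      mul_le_mul_of_nonneg_left h1 (pw_nonneg _ _)
    have h3 : pw 5 k * ((k : ℝ) + 1) = pw 4 k := by
      rw [pw_def, pw_def, pow_succ]
      have hx : ((k : ℝ) + 1) ≠ 0 := by positivity
      field_simp
    linarith
  have Hsum := (((sf1.hasSum.add (sf2.hasSum.mul_left 3)).sub
    (sf3.hasSum.mul_left 6)).add (sf4.hasSum.mul_left 6))
  have hTT : TT 3 3 = (∑' k, pw 3 k * Hr 3 (k + 1)) + 3 * (∑' k, pw 4 k * Hr 2 (k + 1))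
      - 6 * (∑' k, pw 4 k * zetaR 2) + 6 * (∑' k, pw 5 k * H (k + 1)) := by
    rw [hstep1, tsum_congr hrowval]
    exact Hsum.tsum_eq
  have e1 : (∑' k, pw 3 k * Hr 3 (k + 1)) = TT 3 3 + zetaR 6 := by
    have hptw : ∀ k, pw 3 k * Hr 3 (k + 1) = Hr 3 k * pw 3 k + pw 6 k := by
      intro k
      rw [show Hr 3 (k + 1) = Hr 3 k + pw 3 k from Finset.sum_range_succ _ _,
        show pw 6 k = pw 3 k * pw 3 k from (pw_mul 3 3 k).symm]
      ring
    have sH3 : Summable (fun k => Hr 3 k * pw 3 k) := by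
      apply Summable.of_nonneg_of_le
        (fun k => mul_nonneg (Hr_nonneg _ _) (pw_nonneg _ _)) (fun k => ?_)
        ((summable_pw h23).mul_left (zetaR 3))
      exact mul_le_mul_of_nonneg_right (Hr_le h23 _) (pw_nonneg _ _)
    rw [tsum_congr hptw, Summable.tsum_add sH3 (summable_pw (by omega)),
      tsum_Hr_mul 3 3 h23 h23, ← zetaR_eq_s7]
  have e2 : (∑' k, pw 4 k * Hr 2 (k + 1)) = TT 2 4 + zetaR 6 := by
    have hptw : ∀ k, pw 4 k * Hr 2 (k + 1) = Hr 2 k * pw 4 k + pw 6 k := by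
      intro k
      rw [show Hr 2 (k + 1) = Hr 2 k + pw 2 k from Finset.sum_range_succ _ _,
        show pw 6 k = pw 4 k * pw 2 k from (pw_mul 4 2 k).symm]
      ring
    have sH2 : Summable (fun k => Hr 2 k * pw 4 k) := by
      apply Summable.of_nonneg_of_le
        (fun k => mul_nonneg (Hr_nonneg _ _) (pw_nonneg _ _)) (fun k => ?_)
        ((summable_pw h24).mul_left (zetaR 2))
      exact mul_le_mul_of_nonneg_right (Hr_le (le_refl 2) _) (pw_nonneg _ _)
    rw [tsum_congr hptw, Summable.tsum_add sH2 (summable_pw (by omega)),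
      tsum_Hr_mul 2 4 (le_refl 2) h24, ← zetaR_eq_s7]
  have e3 : (∑' k, pw 4 k * zetaR 2) = zetaR 4 * zetaR 2 := by
    rw [tsum_mul_right, ← zetaR_eq_s7]
  have e4 : (∑' k, pw 5 k * H (k + 1)) = ∑' k : ℕ, H (k + 1) / ((k + 1 : ℝ)) ^ 5 := by
    apply tsum_congr
    intro k
    rw [pw_def, one_div, inv_mul_eq_div]
  rw [e1, e2, e3, e4] at hTT
  linarith

/-- `2 ∑_{j,k≥1} 1/(j^3(j+k)^3)
  = ζ(3)^2 − 3ζ(4)ζ(2) + 6 ∑_{k≥1} H_k/k^5 − 3 ∑_{n≥1} H_{n−1,4}/n^2`. -/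
theorem stmt7 :
    2 * ∑' p : ℕ × ℕ, 1 / (((p.1 + 1 : ℝ)) ^ 3 * ((p.1 + 1 : ℝ) + (p.2 + 1 : ℝ)) ^ 3) =
      zetaR 3 ^ 2 - 3 * zetaR 4 * zetaR 2
        + 6 * ∑' k : ℕ, H (k + 1) / ((k + 1 : ℝ)) ^ 5
        - 3 * ∑' n : ℕ, H4 n / ((n + 1 : ℝ)) ^ 2 := by
  have hL : (∑' p : ℕ × ℕ, 1 / (((p.1 + 1 : ℝ)) ^ 3 * ((p.1 + 1 : ℝ) + (p.2 + 1 : ℝ)) ^ 3))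
      = TT 3 3 := by
    rw [TT]
    apply tsum_congr
    intro p
    rw [pw_def, pw_def]
    have hcast : ((p.1 + p.2 + 1 : ℕ) : ℝ) + 1 = ((p.1 : ℝ) + 1) + ((p.2 : ℝ) + 1) := by
      push_cast; ring
    rw [hcast, div_mul_div_comm, one_mul]
  have hB : (∑' n : ℕ, H4 n / ((n + 1 : ℝ)) ^ 2) = TT 4 2 := by
    rw [← tsum_Hr_mul 4 2 (by omega) (le_refl 2)]
    apply tsum_congr
    intro n
    rw [show H4 n = Hr 4 n from rfl, pw_def, mul_one_div]
  have hs1 := stuffle 3 3 (by omega) (by omega)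
  have hs2 := stuffle 4 2 (by omega) (le_refl 2)
  rw [show (3 + 3 : ℕ) = 6 from rfl] at hs1
  rw [show (4 + 2 : ℕ) = 6 from rfl] at hs2
  have hr1 := R1
  rw [hL, hB, pow_two]
  linarith
end
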